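/- (Sample complexity of PRF attention approximation) Let w_1, ..., w_m be i.i.d. standard Gaussian random vectors on ℝ^d and let φ be the PRF map with m features. Let q, k_1, ..., k_n ∈ ℝ^d with ‖q‖ ≤ R and ‖k_j‖ ≤ R for all j, let 0 < ε < 1/2 and δ ∈ (0,1). Define the softmax attention distribution A ∈ ℝ^n by A_j = exp(⟨q, k_j⟩) / Σ_{j'=1}^n exp(⟨q, k_{j'}⟩), and the PRF attention distribution Â ∈ ℝ^n by Â_j = ⟨φ(q), φ(k_j)⟩ / Σ_{j'=1}^n ⟨φ(q), φ(k_{j'})⟩. If m ≥ n·exp(4R²) / (ε²·δ), then Pr( Σ_{j=1}^n |A_j − Â_j| ≥ 4ε ) ≤ δ. -/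

import Mathlib

open MeasureTheory ProbabilityTheory

/-- The joint law of `m` i.i.d. standard Gaussian random vectors on `ℝ^d`. -/
noncomputable def iidStdGaussian (m d : ℕ) : Measure (Fin m → Fin d → ℝ) :=
  Measure.pi fun _ => Measure.pi fun _ => gaussianReal 0 1

/-- The Positive Random Feature (PRF) map with `m` features:
`φ(x)_i = (exp (−‖x‖²/2)/√m) · exp ⟨w_i, x⟩`. -/
noncomputable def prf (m d : ℕ) (W : Fin m → Fin d → ℝ) (x : Fin d → ℝ) : Fin m → ℝ :=
  fun i => (Real.exp (-(∑ j, (x j) ^ 2) / 2) / Real.sqrt m) * Real.exp (∑ j, W i j * x j)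

open Real



section PiLemmas
variable {ι α : Type*} [Fintype ι] [MeasurableSpace α] (μ : Measure α) [SigmaFinite μ]

lemma pi_integral_prod (f : ι → α → ℝ) :
    ∫ x : ι → α, ∏ i, f i (x i) ∂(Measure.pi fun _ => μ) = ∏ i, ∫ x, f i x ∂μ := by
  letI : MeasureSpace α := ⟨μ⟩
  exact MeasureTheory.integral_fintype_prod_eq_prod (μ := fun _ => μ) f

lemma pi_integrable_prod {f : ι → α → ℝ} (hf : ∀ i, Integrable (f i) μ) :
    Integrable (fun x : ι → α => ∏ i, f i (x i)) (Measure.pi fun _ => μ) := by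
  letI : MeasureSpace α := ⟨μ⟩
  exact MeasureTheory.Integrable.fintype_prod hf

end PiLemmas

lemma pdf_mul (t x : ℝ) :
    gaussianPDFReal 0 1 x * Real.exp (t * x) = Real.exp (t^2/2) * gaussianPDFReal t 1 x := by
  unfold gaussianPDFReal
  push_cast
  rw [mul_one]
  have h : rexp (-(x-0)^2/(2*1)) * rexp (t*x) = rexp (t^2/2) * rexp (-(x-t)^2/(2*1)) := by
    rw [← Real.exp_add, ← Real.exp_add]; congr 1; ring
  linear_combination (√(2*π))⁻¹ * h

lemma gaussian_pdf_toNNReal :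
    gaussianReal 0 1 = (volume : Measure ℝ).withDensity
      (fun x => ((gaussianPDFReal 0 1 x).toNNReal : ENNReal)) := by
  rw [gaussianReal_of_var_ne_zero 0 one_ne_zero]
  rfl

lemma gauss_exp_integrable (t : ℝ) :
    Integrable (fun x => Real.exp (t * x)) (gaussianReal 0 1) := by
  rw [gaussian_pdf_toNNReal,
    integrable_withDensity_iff_integrable_smul ((measurable_gaussianPDFReal 0 1).real_toNNReal)]
  refine ((integrable_gaussianPDFReal t 1).const_mul (Real.exp (t^2/2))).congr ?_
  refine Filter.Eventually.of_forall fun x => ?_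
  simp only [NNReal.smul_def, smul_eq_mul, Real.coe_toNNReal _ (gaussianPDFReal_nonneg 0 1 x)]
  rw [pdf_mul]

lemma gauss_exp_integral (t : ℝ) :
    ∫ x, Real.exp (t * x) ∂(gaussianReal 0 1) = Real.exp (t^2/2) := by
  rw [gaussian_pdf_toNNReal,
    integral_withDensity_eq_integral_smul ((measurable_gaussianPDFReal 0 1).real_toNNReal)]
  have : ∀ x, (gaussianPDFReal 0 1 x).toNNReal • Real.exp (t * x)
      = Real.exp (t^2/2) * gaussianPDFReal t 1 x := by
    intro x
    simp only [NNReal.smul_def, smul_eq_mul, Real.coe_toNNReal _ (gaussianPDFReal_nonneg 0 1 x)]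
    rw [pdf_mul]
  simp_rw [this]
  rw [integral_const_mul, integral_gaussianPDFReal_eq_one t one_ne_zero, mul_one]

noncomputable def stdGaussPi (d : ℕ) : Measure (Fin d → ℝ) :=
  Measure.pi fun _ => gaussianReal 0 1

instance (d : ℕ) : IsProbabilityMeasure (stdGaussPi d) :=
  Measure.pi.instIsProbabilityMeasure _

lemma exp_dot_eq_prod {d : ℕ} (v : Fin d → ℝ) (w : Fin d → ℝ) :
    Real.exp (∑ j, w j * v j) = ∏ j, Real.exp (v j * w j) := by
  rw [Real.exp_sum]
  exact Finset.prod_congr rfl fun j _ => by rw [mul_comm]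

lemma nu_exp_integrable {d : ℕ} (v : Fin d → ℝ) :
    Integrable (fun w : Fin d → ℝ => Real.exp (∑ j, w j * v j)) (stdGaussPi d) := by
  have := pi_integrable_prod (gaussianReal 0 1)
    (f := fun j (x : ℝ) => Real.exp (v j * x)) (fun j => gauss_exp_integrable (v j))
  exact this.congr (Filter.Eventually.of_forall fun w => (exp_dot_eq_prod v w).symm)

lemma nu_exp_integral {d : ℕ} (v : Fin d → ℝ) :
    ∫ w, Real.exp (∑ j, w j * v j) ∂(stdGaussPi d) = Real.exp ((∑ j, (v j)^2)/2) := by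
  simp_rw [exp_dot_eq_prod v]
  rw [show (stdGaussPi d) = Measure.pi fun _ => gaussianReal 0 1 from rfl,
    pi_integral_prod (gaussianReal 0 1) (fun j (x : ℝ) => Real.exp (v j * x))]
  simp_rw [gauss_exp_integral]
  rw [← Real.exp_sum, Finset.sum_div]

section Coord
variable {ι α : Type*} [Fintype ι] [DecidableEq ι] [MeasurableSpace α]
  (μ : Measure α) [IsProbabilityMeasure μ]

lemma coord_prod_eq {g : α → ℝ} (l : ι) (x : ι → α) :
    ∏ i, (if i = l then g else fun _ => (1:ℝ)) (x i) = g (x l) := by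
  rw [Finset.prod_eq_single l (fun i _ hi => by simp [hi]) (by simp)]
  simp

lemma coord_integrable {g : α → ℝ} (hg : Integrable g μ) (l : ι) :
    Integrable (fun x : ι → α => g (x l)) (Measure.pi fun _ => μ) := by
  have h := pi_integrable_prod μ (f := fun i => if i = l then g else fun _ => (1:ℝ))
    (fun i => by by_cases hi : i = l <;> simp [hi, hg, integrable_const])
  exact h.congr (Filter.Eventually.of_forall fun x => coord_prod_eq l x)

lemma coord_integral {g : α → ℝ} (l : ι) :
    ∫ x : ι → α, g (x l) ∂(Measure.pi fun _ => μ) = ∫ y, g y ∂μ := by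
  have h := pi_integral_prod μ (fun i => if i = l then g else fun _ => (1:ℝ))
  simp_rw [coord_prod_eq] at h
  rw [h, Finset.prod_eq_single l (fun i _ hi => by simp [hi]) (by simp)]
  simp

lemma coord2_prod_eq {g h : α → ℝ} {l l' : ι} (hne : l ≠ l') (x : ι → α) :
    ∏ i, (if i = l then g else if i = l' then h else fun _ => (1:ℝ)) (x i)
      = g (x l) * h (x l') := by
  rw [← Finset.prod_subset (Finset.subset_univ {l, l'})
    (fun i _ hi => by
      simp only [Finset.mem_insert, Finset.mem_singleton, not_or] at hi
      simp [hi.1, hi.2]),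
    Finset.prod_pair hne]
  simp [hne, hne.symm]

lemma coord2_integrable {g h : α → ℝ} (hg : Integrable g μ) (hh : Integrable h μ)
    {l l' : ι} (hne : l ≠ l') :
    Integrable (fun x : ι → α => g (x l) * h (x l')) (Measure.pi fun _ => μ) := by
  have hint := pi_integrable_prod μ
    (f := fun i => if i = l then g else if i = l' then h else fun _ => (1:ℝ))
    (fun i => by
      by_cases hi : i = l
      · simp [hi, hg]
      · by_cases hi' : i = l' <;> simp [hi, hi', hne.symm, hh, integrable_const])
  exact hint.congr (Filter.Eventually.of_forall fun x => coord2_prod_eq hne x)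

lemma coord2_integral {g h : α → ℝ} {l l' : ι} (hne : l ≠ l') :
    ∫ x : ι → α, g (x l) * h (x l') ∂(Measure.pi fun _ => μ)
      = (∫ y, g y ∂μ) * ∫ y, h y ∂μ := by
  have hI := pi_integral_prod μ
    (fun i => if i = l then g else if i = l' then h else fun _ => (1:ℝ))
  simp_rw [coord2_prod_eq hne] at hI
  rw [hI, ← Finset.prod_subset (Finset.subset_univ {l, l'})
    (fun i _ hi => by
      simp only [Finset.mem_insert, Finset.mem_singleton, not_or] at hi
      simp [hi.1, hi.2]),
    Finset.prod_pair hne]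
  simp [hne, hne.symm]

end Coord

section Moment
variable {ι α : Type*} [Fintype ι] [DecidableEq ι] [MeasurableSpace α]
  (μ : Measure α) [IsProbabilityMeasure μ]

lemma pair_term_integrable {g : α → ℝ} (hg : Integrable g μ)
    (hg2 : Integrable (fun y => g y * g y) μ) (l l' : ι) :
    Integrable (fun x : ι → α => g (x l) * g (x l')) (Measure.pi fun _ => μ) := by
  by_cases h : l = l'
  · subst h; exact coord_integrable μ hg2 l
  · exact coord2_integrable μ hg hg h

lemma pair_term_integral {g : α → ℝ} (hg2 : Integrable (fun y => g y * g y) μ) (l l' : ι) :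
    ∫ x : ι → α, g (x l) * g (x l') ∂(Measure.pi fun _ => μ)
      = if l = l' then (∫ y, g y * g y ∂μ) else (∫ y, g y ∂μ)^2 := by
  by_cases h : l = l'
  · subst h; rw [if_pos rfl]; exact coord_integral μ (g := fun y => g y * g y) l
  · rw [if_neg h, coord2_integral μ h, sq]

lemma sum_sq_eq {g : α → ℝ} (x : ι → α) :
    (∑ l, g (x l))^2 = ∑ l, ∑ l', g (x l) * g (x l') := by
  rw [sq, Finset.sum_mul_sum]

lemma sum_integrable {g : α → ℝ} (hg : Integrable g μ) :
    Integrable (fun x : ι → α => ∑ l, g (x l)) (Measure.pi fun _ => μ) :=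
  integrable_finset_sum _ (fun l _ => coord_integrable μ hg l)

lemma sum_sq_integrable {g : α → ℝ} (hg : Integrable g μ)
    (hg2 : Integrable (fun y => g y * g y) μ) :
    Integrable (fun x : ι → α => (∑ l, g (x l))^2) (Measure.pi fun _ => μ) := by
  have : Integrable (fun x : ι → α => ∑ l, ∑ l', g (x l) * g (x l')) (Measure.pi fun _ => μ) :=
    integrable_finset_sum _ (fun l _ => integrable_finset_sum _
      (fun l' _ => pair_term_integrable μ hg hg2 l l'))
  exact this.congr (Filter.Eventually.of_forall fun x => (sum_sq_eq x).symm)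

lemma sum_integral {g : α → ℝ} (hg : Integrable g μ) :
    ∫ x : ι → α, ∑ l, g (x l) ∂(Measure.pi fun _ => μ)
      = (Fintype.card ι : ℝ) * ∫ y, g y ∂μ := by
  rw [integral_finset_sum _ (fun l _ => coord_integrable μ hg l)]
  simp_rw [coord_integral μ]
  rw [Finset.sum_const, Finset.card_univ, nsmul_eq_mul]

lemma sum_sq_integral {g : α → ℝ} (hg : Integrable g μ)
    (hg2 : Integrable (fun y => g y * g y) μ) :
    ∫ x : ι → α, (∑ l, g (x l))^2 ∂(Measure.pi fun _ => μ)
      = (Fintype.card ι : ℝ) * (∫ y, g y * g y ∂μ)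
        + ((Fintype.card ι : ℝ)^2 - (Fintype.card ι : ℝ)) * (∫ y, g y ∂μ)^2 := by
  set c := (Fintype.card ι : ℝ)
  set a := ∫ y, g y ∂μ
  set b := ∫ y, g y * g y ∂μ
  simp_rw [sum_sq_eq]
  rw [integral_finset_sum _ (fun l _ => integrable_finset_sum _
      (fun l' _ => pair_term_integrable μ hg hg2 l l'))]
  have : ∀ l : ι, ∫ x : ι → α, ∑ l', g (x l) * g (x l') ∂(Measure.pi fun _ => μ)
      = b + (c - 1) * a^2 := by
    intro l
    rw [integral_finset_sum _ (fun l' _ => pair_term_integrable μ hg hg2 l l')]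
    simp_rw [pair_term_integral μ hg2 l]
    have hsplit : ∀ l' : ι, (if l = l' then b else a^2) = a^2 + (if l = l' then b - a^2 else 0) := by
      intro l'; by_cases h : l = l' <;> simp [h]
    simp_rw [show ∀ l' : ι, (if l = l' then (∫ y, g y * g y ∂μ) else (∫ y, g y ∂μ)^2)
      = a^2 + (if l = l' then b - a^2 else 0) from hsplit]
    rw [Finset.sum_add_distrib, Finset.sum_const,
      Finset.sum_ite_eq Finset.univ l (fun _ => b - a^2)]
    simp [Finset.card_univ, c]
    ring
  simp_rw [this]
  rw [Finset.sum_const, Finset.card_univ, nsmul_eq_mul]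
  ring

lemma dev_sq_integrable {g : α → ℝ} (hg : Integrable g μ)
    (hg2 : Integrable (fun y => g y * g y) μ) (r : ℝ) :
    Integrable (fun x : ι → α => ((∑ l, g (x l)) - r)^2) (Measure.pi fun _ => μ) := by
  have : Integrable (fun x : ι → α =>
      (∑ l, g (x l))^2 - (2*r)*(∑ l, g (x l)) + r^2) (Measure.pi fun _ => μ) :=
    (((sum_sq_integrable μ hg hg2).sub ((sum_integrable μ hg).const_mul (2*r))).add
      (integrable_const _))
  exact this.congr (Filter.Eventually.of_forall fun x => by ring)

lemma dev_sq_integral {g : α → ℝ} (hg : Integrable g μ)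
    (hg2 : Integrable (fun y => g y * g y) μ) :
    ∫ x : ι → α, ((∑ l, g (x l)) - (Fintype.card ι : ℝ) * ∫ y, g y ∂μ)^2
        ∂(Measure.pi fun _ => μ)
      = (Fintype.card ι : ℝ) * ((∫ y, g y * g y ∂μ) - (∫ y, g y ∂μ)^2) := by
  set c := (Fintype.card ι : ℝ)
  set a := ∫ y, g y ∂μ
  set b := ∫ y, g y * g y ∂μ
  have hexp : ∀ x : ι → α, ((∑ l, g (x l)) - c*a)^2
      = (∑ l, g (x l))^2 - (2*(c*a))*(∑ l, g (x l)) + (c*a)^2 := fun x => by ring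
  simp_rw [hexp]
  have h2 : Integrable (fun x : ι → α => (2*(c*a))*(∑ l, g (x l))) (Measure.pi fun _ => μ) :=
    (sum_integrable μ hg).const_mul (2*(c*a))
  have h1 : Integrable (fun x : ι → α => (∑ l, g (x l))^2 - (2*(c*a))*(∑ l, g (x l)))
      (Measure.pi fun _ => μ) := (sum_sq_integrable μ hg hg2).sub h2
  rw [integral_add h1 (integrable_const _),
    integral_sub (sum_sq_integrable μ hg hg2) h2,
    integral_const_mul, sum_integral μ hg, sum_sq_integral μ hg hg2, integral_const]
  simp only [measure_univ, ENNReal.toReal_one, smul_eq_mul, one_mul, probReal_univ, mul_one]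
  ring

end Moment

lemma det_bound {n : ℕ} (hn : 0 < n) (s t : Fin n → ℝ)
    (hs : ∀ i, 0 < s i) (ht : ∀ i, 0 < t i) (ε : ℝ) (hε : 0 < ε) (hε2 : ε < 1/2)
    (h : ∀ i, |t i - s i| < ε * s i) :
    ∑ i, |s i / (∑ i', s i') - t i / (∑ i', t i')| < 4 * ε := by
  haveI : NeZero n := ⟨hn.ne'⟩
  have hnemp : (Finset.univ : Finset (Fin n)).Nonempty := Finset.univ_nonempty
  set S := ∑ i', s i' with hS
  set T := ∑ i', t i' with hT
  have hSpos : 0 < S := Finset.sum_pos (fun i _ => hs i) hnemp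
  have hTpos : 0 < T := Finset.sum_pos (fun i _ => ht i) hnemp
  set D := ∑ i, |t i - s i| with hD
  have hDlt : D < ε * S := by
    rw [hD, hS, Finset.mul_sum]
    exact Finset.sum_lt_sum_of_nonempty hnemp (fun i _ => h i)
  have hTS : |T - S| ≤ D := by
    rw [hT, hS, ← Finset.sum_sub_distrib]
    exact Finset.abs_sum_le_sum_abs _ _
  have hTgt : (1 - ε) * S < T := by
    have : S - T ≤ |T - S| := by rw [abs_sub_comm]; exact le_abs_self _
    nlinarith
  have hterm : ∀ i, |s i / S - t i / T| = |s i * T - t i * S| / (S * T) := by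
    intro i
    rw [div_sub_div _ _ hSpos.ne' hTpos.ne', abs_div, abs_of_pos (mul_pos hSpos hTpos),
      mul_comm S (t i)]
  have hnum : ∀ i, |s i * T - t i * S| ≤ s i * |T - S| + |t i - s i| * S := by
    intro i
    have : s i * T - t i * S = s i * (T - S) - (t i - s i) * S := by ring
    rw [this]
    refine (abs_sub _ _).trans ?_
    rw [abs_mul, abs_mul, abs_of_pos (hs i), abs_of_pos hSpos]
  calc ∑ i, |s i / S - t i / T| = ∑ i, |s i * T - t i * S| / (S * T) := by
        exact Finset.sum_congr rfl fun i _ => hterm i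
    _ = (∑ i, |s i * T - t i * S|) / (S * T) := by rw [Finset.sum_div]
    _ ≤ (S * |T - S| + D * S) / (S * T) := by
        refine (div_le_div_iff_of_pos_right (mul_pos hSpos hTpos)).mpr ?_
        calc ∑ i, |s i * T - t i * S| ≤ ∑ i, (s i * |T - S| + |t i - s i| * S) :=
              Finset.sum_le_sum fun i _ => hnum i
          _ = S * |T - S| + D * S := by
              rw [Finset.sum_add_distrib, ← Finset.sum_mul, ← Finset.sum_mul, ← hS, ← hD]
    _ < 4 * ε := by
        rw [div_lt_iff₀ (mul_pos hSpos hTpos)]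
        have h1 : S * |T - S| ≤ S * D := by nlinarith
        have h3 : D * S < ε * S * S := by nlinarith
        have h4 : 4 * ε * ((1 - ε) * S) ≤ 4 * ε * T := by nlinarith
        have h5 : 2 * ε * S * S ≤ 4 * ε * ((1 - ε) * S) * S := by
          nlinarith [mul_nonneg (mul_nonneg hε.le (by linarith : (0:ℝ) ≤ 1 - 2*ε)) (mul_nonneg hSpos.le hSpos.le)]
        have h6 : 4 * ε * ((1 - ε) * S) * S ≤ 4 * ε * T * S := by nlinarith
        nlinarith



set_option maxHeartbeats 2000000 in
/-- Sample complexity of PRF attention approximation: if `‖q‖, ‖k_j‖ ≤ R` and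
`m ≥ n exp (4R²) / (ε² δ)`, then the ℓ¹ distance between the softmax attention
distribution `A` and the PRF attention distribution `Â` is at least `4ε` with
probability at most `δ`. -/
theorem prf_attention_sample_complexity (m d n : ℕ) (hm : 0 < m) (hn : 0 < n)
    (q : Fin d → ℝ) (k : Fin n → Fin d → ℝ)
    (R : ℝ) (hR : 0 < R) (hq : Real.sqrt (∑ j, (q j) ^ 2) ≤ R)
    (hk : ∀ i, Real.sqrt (∑ j, (k i j) ^ 2) ≤ R)
    (ε δ : ℝ) (hε0 : 0 < ε) (hε1 : ε < 1 / 2) (hδ0 : 0 < δ) (hδ1 : δ < 1)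
    (hm' : n * Real.exp (4 * R ^ 2) / (ε ^ 2 * δ) ≤ m) :
    iidStdGaussian m d
        {W | 4 * ε ≤
          ∑ i : Fin n,
            |Real.exp (∑ j, q j * k i j) / (∑ i', Real.exp (∑ j, q j * k i' j)) -
              (∑ l, prf m d W q l * prf m d W (k i) l) /
                (∑ i', ∑ l, prf m d W q l * prf m d W (k i') l)|}
      ≤ ENNReal.ofReal δ := by
  haveI : NeZero m := ⟨hm.ne'⟩
  haveI : NeZero n := ⟨hn.ne'⟩
  have hmpos : (0:ℝ) < m := by exact_mod_cast hm
  have hm0 : (m:ℝ) ≠ 0 := hmpos.ne'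
  have hP : iidStdGaussian m d = (Measure.pi fun _ : Fin m => stdGaussPi d) := rfl
  haveI : IsProbabilityMeasure (iidStdGaussian m d) := by
    rw [hP]; exact Measure.pi.instIsProbabilityMeasure _
  -- basic data
  set v : Fin n → Fin d → ℝ := fun i j => q j + k i j with hv
  set An : Fin n → ℝ := fun i => ∑ j, (v i j)^2 with hAn
  set a : Fin n → ℝ := fun i => rexp (An i / 2) with ha
  set b : Fin n → ℝ := fun i => rexp (2 * An i) with hb
  set c : Fin n → ℝ := fun i => rexp ((-((∑ j, (q j)^2) + ∑ j, (k i j)^2)) / 2) with hc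
  set s : Fin n → ℝ := fun i => rexp (∑ j, q j * k i j) with hs
  set F : Fin n → (Fin d → ℝ) → ℝ := fun i w => rexp (∑ j, w j * v i j) with hF
  have hspos : ∀ i, 0 < s i := fun i => Real.exp_pos _
  have hcpos : ∀ i, 0 < c i := fun i => Real.exp_pos _
  have hapos : ∀ i, 0 < a i := fun i => Real.exp_pos _
  -- norm decomposition
  have hA_dec : ∀ i, An i = (∑ j, (q j)^2) + 2 * (∑ j, q j * k i j) + ∑ j, (k i j)^2 := by
    intro i
    have h1 : ∀ j, (v i j)^2 = (q j)^2 + 2*(q j * k i j) + (k i j)^2 := fun j => by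
      simp only [hv]; ring
    simp only [hAn]
    simp_rw [h1]
    rw [Finset.sum_add_distrib, Finset.sum_add_distrib, Finset.mul_sum]
  have hsa : ∀ i, c i * a i = s i := by
    intro i
    simp only [hc, ha, hs, ← Real.exp_add]
    congr 1
    rw [hA_dec i]; ring
  have ha2 : ∀ i, a i ^ 2 = rexp (An i) := by
    intro i; simp only [ha, sq, ← Real.exp_add]; congr 1; ring
  have hb2 : ∀ i, b i = rexp (An i) * rexp (An i) := by
    intro i; simp only [hb, ← Real.exp_add]; congr 1; ring
  -- integrability of features
  have hF_int : ∀ i, Integrable (F i) (stdGaussPi d) := fun i => nu_exp_integrable (v i)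
  have hF2_eq : ∀ i, (fun w => F i w * F i w)
      = fun w : Fin d → ℝ => rexp (∑ j, w j * (2 * v i j)) := by
    intro i; funext w
    simp only [hF, ← Real.exp_add, ← Finset.sum_add_distrib]
    congr 1
    exact Finset.sum_congr rfl fun j _ => by ring
  have hF2_int : ∀ i, Integrable (fun w => F i w * F i w) (stdGaussPi d) := by
    intro i; rw [hF2_eq i]; exact nu_exp_integrable _
  have hFa : ∀ i, ∫ y, F i y ∂(stdGaussPi d) = a i := by
    intro i; simp only [hF, ha, hAn]; exact nu_exp_integral (v i)
  have hFb : ∀ i, ∫ y, F i y * F i y ∂(stdGaussPi d) = b i := by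
    intro i
    rw [hF2_eq i, nu_exp_integral]
    simp only [hb]
    congr 1
    have : ∑ j, (2 * v i j)^2 = 4 * ∑ j, (v i j)^2 := by
      rw [Finset.mul_sum]; exact Finset.sum_congr rfl fun j _ => by ring
    rw [this, hAn]; ring
  -- prf rewriting
  have hprf : ∀ (W : Fin m → Fin d → ℝ) (i),
      (∑ l, prf m d W q l * prf m d W (k i) l) = (c i / m) * ∑ l, F i (W l) := by
    intro W i
    rw [Finset.mul_sum]
    refine Finset.sum_congr rfl fun l _ => ?_
    simp only [prf, hF]
    have hsm : Real.sqrt m * Real.sqrt m = (m:ℝ) := Real.mul_self_sqrt (Nat.cast_nonneg m)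
    have hsm0 : Real.sqrt m ≠ 0 := (Real.sqrt_pos.mpr hmpos).ne'
    have h1 : ∑ j, W l j * q j + ∑ j, W l j * k i j = ∑ j, W l j * v i j := by
      rw [← Finset.sum_add_distrib]
      exact Finset.sum_congr rfl fun j _ => by simp only [hv]; ring
    have hcc : c i = rexp (-(∑ j, (q j)^2) / 2) * rexp (-(∑ j, (k i j)^2) / 2) := by
      simp only [hc, ← Real.exp_add]; congr 1; ring
    rw [← h1, Real.exp_add, hcc]
    field_simp
    ring
    exact (Real.sq_sqrt (Nat.cast_nonneg _)).symm
  -- the auxiliary random variable G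
  set G : (Fin m → Fin d → ℝ) → ℝ :=
    fun W => ∑ i, ((c i / m) * (∑ l, F i (W l)) - s i)^2 / (s i)^2 with hG
  have hterm_eq : ∀ i (W : Fin m → Fin d → ℝ),
      ((c i / m) * (∑ l, F i (W l)) - s i)^2 / (s i)^2
        = (c i / ((m:ℝ) * s i))^2 * ((∑ l, F i (W l)) - (m:ℝ) * a i)^2 := by
    intro i W
    rw [← hsa i]
    have hc0 : c i ≠ 0 := (hcpos i).ne'
    have ha0 : a i ≠ 0 := (hapos i).ne'
    field_simp
  have hterm_int : ∀ i, Integrable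
      (fun W : Fin m → Fin d → ℝ => ((c i / m) * (∑ l, F i (W l)) - s i)^2 / (s i)^2)
      (Measure.pi fun _ : Fin m => stdGaussPi d) := by
    intro i
    have := (dev_sq_integrable (stdGaussPi d) (ι := Fin m) (hF_int i) (hF2_int i)
      ((m:ℝ) * a i)).const_mul ((c i / ((m:ℝ) * s i))^2)
    exact this.congr (Filter.Eventually.of_forall fun W => (hterm_eq i W).symm)
  have hG_int : Integrable G (Measure.pi fun _ : Fin m => stdGaussPi d) := by
    rw [hG]
    exact integrable_finset_sum _ fun i _ => hterm_int i
  -- expectation of G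
  have hdev_int : ∀ i, ∫ W : Fin m → Fin d → ℝ,
      ((∑ l, F i (W l)) - (m:ℝ) * a i)^2 ∂(Measure.pi fun _ : Fin m => stdGaussPi d)
        = (m:ℝ) * (b i - a i ^ 2) := by
    intro i
    have h := dev_sq_integral (stdGaussPi d) (ι := Fin m) (hF_int i) (hF2_int i)
    rw [hFa, hFb, Fintype.card_fin] at h
    exact h
  have hEG_i : ∀ i, (c i / ((m:ℝ) * s i))^2 * ((m:ℝ) * (b i - a i ^ 2))
      = (rexp (An i) - 1) / m := by
    intro i
    have hc0 : c i ≠ 0 := (hcpos i).ne'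
    have ha0 : a i ≠ 0 := (hapos i).ne'
    have hE0 : rexp (An i) ≠ 0 := (Real.exp_pos _).ne'
    rw [← hsa i, hb2 i, ha2 i]
    field_simp
    linear_combination (rexp (An i) - 1) * (ha2 i).symm
  have hEG : ∫ W, G W ∂(Measure.pi fun _ : Fin m => stdGaussPi d)
      = ∑ i, (rexp (An i) - 1) / m := by
    rw [hG, integral_finset_sum _ fun i _ => hterm_int i]
    refine Finset.sum_congr rfl fun i _ => ?_
    simp_rw [hterm_eq i]
    rw [integral_const_mul, hdev_int i, hEG_i i]
  -- bounding the expectation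
  have hq2 : (∑ j, (q j)^2) ≤ R^2 := by
    have h0 : (0:ℝ) ≤ ∑ j, (q j)^2 := Finset.sum_nonneg fun j _ => sq_nonneg _
    nlinarith [Real.sq_sqrt h0, Real.sqrt_nonneg (∑ j, (q j)^2)]
  have hk2 : ∀ i, (∑ j, (k i j)^2) ≤ R^2 := by
    intro i
    have h0 : (0:ℝ) ≤ ∑ j, (k i j)^2 := Finset.sum_nonneg fun j _ => sq_nonneg _
    nlinarith [Real.sq_sqrt h0, Real.sqrt_nonneg (∑ j, (k i j)^2), hk i]
  have hqk : ∀ i, (∑ j, q j * k i j) ≤ R^2 := by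
    intro i
    have hcs := Finset.sum_mul_sq_le_sq_mul_sq Finset.univ q (k i)
    have h0k : (0:ℝ) ≤ ∑ j, (k i j)^2 := Finset.sum_nonneg fun j _ => sq_nonneg _
    have h4 : (∑ j, q j * k i j)^2 ≤ (R^2)^2 :=
      le_trans hcs (by nlinarith [mul_le_mul hq2 (hk2 i) h0k (sq_nonneg R)])
    have hR2 : (0:ℝ) < R^2 := by positivity
    nlinarith [h4, hR2, sq_nonneg ((∑ j, q j * k i j) - R^2)]
  have hAle : ∀ i, An i ≤ 4 * R^2 := by
    intro i; rw [hA_dec i]; nlinarith [hq2, hk2 i, hqk i]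
  have hEG_le : ∫ W, G W ∂(Measure.pi fun _ : Fin m => stdGaussPi d) ≤ ε^2 * δ := by
    rw [hEG]
    have h1 : ∀ i : Fin n, (rexp (An i) - 1) / m ≤ rexp (4 * R^2) / m := by
      intro i
      refine (div_le_div_iff_of_pos_right hmpos).mpr ?_
      have := Real.exp_le_exp.mpr (hAle i)
      linarith
    calc (∑ i : Fin n, (rexp (An i) - 1) / m) ≤ ∑ i : Fin n, rexp (4 * R^2) / m :=
          Finset.sum_le_sum fun i _ => h1 i
      _ = n * rexp (4 * R^2) / m := by
          rw [Finset.sum_const, Finset.card_univ, Fintype.card_fin, nsmul_eq_mul]; ring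
      _ ≤ ε^2 * δ := by
          rw [div_le_iff₀ hmpos]
          have hεδ : (0:ℝ) < ε^2 * δ := by positivity
          rw [div_le_iff₀ hεδ] at hm'
          nlinarith [hm']
  -- Markov
  have hG_nn : 0 ≤ᵐ[Measure.pi fun _ : Fin m => stdGaussPi d] G := by
    refine Filter.Eventually.of_forall fun W => ?_
    exact Finset.sum_nonneg fun i _ => div_nonneg (sq_nonneg _) (sq_nonneg _)
  have hmarkov := mul_meas_ge_le_integral_of_nonneg hG_nn hG_int (ε^2)
  have htoReal : ((Measure.pi fun _ : Fin m => stdGaussPi d) {W | ε^2 ≤ G W}).toReal ≤ δ := by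
    have hε2 : (0:ℝ) < ε^2 := by positivity
    have hle : ε^2 * ((Measure.pi fun _ : Fin m => stdGaussPi d) {W | ε^2 ≤ G W}).toReal
        ≤ ε^2 * δ := hmarkov.trans hEG_le
    exact le_of_mul_le_mul_left hle hε2
  -- the event is contained in {ε² ≤ G}
  have hsub : {W : Fin m → Fin d → ℝ | 4 * ε ≤
      ∑ i : Fin n,
        |Real.exp (∑ j, q j * k i j) / (∑ i', Real.exp (∑ j, q j * k i' j)) -
          (∑ l, prf m d W q l * prf m d W (k i) l) /
            (∑ i', ∑ l, prf m d W q l * prf m d W (k i') l)|}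
      ⊆ {W | ε^2 ≤ G W} := by
    intro W hW
    simp only [Set.mem_setOf_eq] at hW ⊢
    by_contra hcon
    push_neg at hcon
    set t : Fin n → ℝ := fun i => (c i / m) * ∑ l, F i (W l) with ht
    have htpos : ∀ i, 0 < t i := by
      intro i
      exact mul_pos (div_pos (hcpos i) hmpos)
        (Finset.sum_pos (fun l _ => Real.exp_pos _) Finset.univ_nonempty)
    have hclose : ∀ i, |t i - s i| < ε * s i := by
      intro i
      have h1 : (t i - s i)^2 / (s i)^2 ≤ G W :=
        Finset.single_le_sum
          (f := fun i' => ((c i' / m) * (∑ l, F i' (W l)) - s i')^2 / (s i')^2)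
          (fun i' _ => div_nonneg (sq_nonneg _) (sq_nonneg _)) (Finset.mem_univ i)
      have h2 : (t i - s i)^2 < (ε * s i)^2 := by
        have hs2 : (0:ℝ) < (s i)^2 := by positivity
        have h3 : (t i - s i)^2 / (s i)^2 < ε^2 := lt_of_le_of_lt h1 hcon
        rw [div_lt_iff₀ hs2] at h3
        nlinarith [h3]
      exact abs_lt_of_sq_lt_sq h2 (by positivity)
    have hdet := det_bound hn s t hspos htpos ε hε0 hε1 hclose
    have hsum_eq : (∑ i : Fin n,
        |Real.exp (∑ j, q j * k i j) / (∑ i', Real.exp (∑ j, q j * k i' j)) -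
          (∑ l, prf m d W q l * prf m d W (k i) l) /
            (∑ i', ∑ l, prf m d W q l * prf m d W (k i') l)|)
        = ∑ i, |s i / (∑ i', s i') - t i / (∑ i', t i')| := by
      refine Finset.sum_congr rfl fun i _ => ?_
      have hden : (∑ i', ∑ l, prf m d W q l * prf m d W (k i') l) = ∑ i', t i' :=
        Finset.sum_congr rfl fun i' _ => hprf W i'
      rw [hden, hprf W i]
    rw [hsum_eq] at hW
    linarith
  refine le_trans (measure_mono hsub) ?_
  rw [hP]
  exact (ENNReal.le_ofReal_iff_toReal_le (measure_ne_top _ _) hδ0.le).mpr htoReal
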